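/- Second product bound: with b=7/6, p_j as above, and ε ∈ (0,1), there exist constants c, c₇ > 0 independent of j and ε such that (∏_{i=1}^{j} (1 + i²/ε)^{b^{j-i+1}})^{1/p_j} ≤ c/ε^{c₇} for all j ≥ 1. -/

import Mathlib

open Finset Real

private lemma one_add_sq_le_four_pow (i : ℕ) : (1:ℝ) + (i:ℝ)^2 ≤ 4 ^ i := by
  induction i with
  | zero => norm_num
  | succ n ih =>
    push_cast
    push_cast at ih
    have h4 : (4:ℝ) ^ (n + 1) = 4 ^ n * 4 := pow_succ 4 n
    rw [h4]
    nlinarith [sq_nonneg ((n:ℝ) - 1), Nat.cast_nonneg (α := ℝ) n]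

private lemma sum_geo_le (j : ℕ) : ∑ i ∈ Finset.Icc 1 j, ((6:ℝ)/7) ^ i ≤ 7 := by
  have hs : Summable (fun i : ℕ => ((6:ℝ)/7) ^ i) :=
    summable_geometric_of_lt_one (by norm_num) (by norm_num)
  have h := Summable.sum_le_tsum (Finset.Icc 1 j) (fun i _ => by positivity) hs
  have ht : ∑' i : ℕ, ((6:ℝ)/7) ^ i = 7 := by
    rw [tsum_geometric_of_lt_one (by norm_num) (by norm_num)]
    norm_num
  linarith

private lemma sum_igeo_le (j : ℕ) : ∑ i ∈ Finset.Icc 1 j, (i:ℝ) * ((6:ℝ)/7) ^ i ≤ 42 := by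
  have hs : Summable (fun i : ℕ => (i:ℝ) * ((6:ℝ)/7) ^ i) := by
    have := summable_pow_mul_geometric_of_norm_lt_one (k := 1) (r := (6:ℝ)/7)
      (by rw [Real.norm_eq_abs, abs_lt]; norm_num)
    simpa using this
  have h := Summable.sum_le_tsum (Finset.Icc 1 j) (fun i _ => by positivity) hs
  have ht : ∑' i : ℕ, (i:ℝ) * ((6:ℝ)/7) ^ i = 42 := by
    rw [tsum_coe_mul_geometric_of_norm_lt_one (by rw [Real.norm_eq_abs, abs_lt]; norm_num)]
    norm_num
  linarith

private lemma p_lower (p : ℕ → ℝ) (hp1 : p 1 = 2)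
    (hrec : ∀ j : ℕ, 1 ≤ j → p (j + 1) = 7 / 6 * p j + 1) :
    ∀ j : ℕ, 1 ≤ j → 2 * (7/6:ℝ) ^ (j-1) ≤ p j := by
  intro j hj
  induction j, hj using Nat.le_induction with
  | base => simp [hp1]
  | succ n hn ih =>
    rw [hrec n hn]
    have h1 : (7/6:ℝ) ^ n = (7/6) ^ (n-1) * (7/6) := by
      rw [← pow_succ]
      congr 1
      omega
    have h2 : n + 1 - 1 = n := by omega
    rw [h2, h1]
    nlinarith [ih]

private lemma log_four_le_two : Real.log 4 ≤ 2 := by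
  rw [Real.log_le_iff_le_exp (by norm_num)]
  have h := Real.exp_one_gt_d9
  have : Real.exp 2 = Real.exp 1 * Real.exp 1 := by
    rw [← Real.exp_add]; norm_num
  nlinarith

/-- Second product bound:
`(∏_{i=1}^j (1+i²/ε)^{b^{j-i+1}})^{1/p_j} ≤ c/ε^{c₇}` with `b = 7/6`. -/
theorem iteration_product_bound_eps
    (p : ℕ → ℝ) (hp1 : p 1 = 2) (hrec : ∀ j : ℕ, 1 ≤ j → p (j + 1) = 7 / 6 * p j + 1) :
    ∃ c c₇ : ℝ, 0 < c ∧ 0 < c₇ ∧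
      ∀ ε : ℝ, 0 < ε → ε < 1 → ∀ j : ℕ, 1 ≤ j →
        (∏ i ∈ Finset.Icc 1 j, (1 + (i : ℝ) ^ 2 / ε) ^ ((7 / 6 : ℝ) ^ (j - i + 1))) ^ (1 / p j)
          ≤ c / ε ^ c₇ := by
  refine ⟨Real.exp 58, 5, Real.exp_pos _, by norm_num, ?_⟩
  intro ε hε hε1 j hj
  have hlogε : Real.log ε < 0 := Real.log_neg hε hε1
  have hppos : 0 < p j :=
    lt_of_lt_of_le (by positivity) (p_lower p hp1 hrec j hj)
  have hfac : ∀ i ∈ Finset.Icc 1 j,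
      (0:ℝ) < (1 + (i : ℝ) ^ 2 / ε) ^ ((7 / 6 : ℝ) ^ (j - i + 1)) := by
    intro i _
    apply Real.rpow_pos_of_pos
    positivity
  have hprodpos : 0 < ∏ i ∈ Finset.Icc 1 j,
      (1 + (i : ℝ) ^ 2 / ε) ^ ((7 / 6 : ℝ) ^ (j - i + 1)) := Finset.prod_pos hfac
  have hLpos : 0 < (∏ i ∈ Finset.Icc 1 j,
      (1 + (i : ℝ) ^ 2 / ε) ^ ((7 / 6 : ℝ) ^ (j - i + 1))) ^ (1 / p j) :=
    Real.rpow_pos_of_pos hprodpos _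
  have hRHS : Real.exp 58 / ε ^ (5:ℝ) = Real.exp (58 - 5 * Real.log ε) := by
    rw [Real.rpow_def_of_pos hε, Real.exp_sub]
    ring_nf
  rw [hRHS, ← Real.exp_log hLpos]
  apply Real.exp_le_exp.mpr
  rw [Real.log_rpow hprodpos, Real.log_prod (fun i hi => (hfac i hi).ne')]
  -- pointwise log bound
  have hlog : ∀ i ∈ Finset.Icc 1 j,
      Real.log ((1 + (i : ℝ) ^ 2 / ε) ^ ((7 / 6 : ℝ) ^ (j - i + 1)))
        ≤ (7/6:ℝ) ^ (j - i + 1) * (2 * i - Real.log ε) := by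
    intro i _
    rw [Real.log_rpow (by positivity)]
    apply mul_le_mul_of_nonneg_left _ (by positivity)
    have h1 : (1:ℝ) + (i:ℝ)^2/ε ≤ (4:ℝ)^i / ε := by
      have ha : (1:ℝ) + (i:ℝ)^2/ε ≤ (1 + (i:ℝ)^2)/ε := by
        rw [add_div]
        have : (1:ℝ) ≤ 1/ε := by
          rw [le_div_iff₀ hε]; linarith
        linarith
      have hb : ((1:ℝ) + (i:ℝ)^2)/ε ≤ (4:ℝ)^i / ε := by
        gcongr
        exact one_add_sq_le_four_pow i
      linarith
    calc Real.log (1 + (i:ℝ)^2/ε) ≤ Real.log ((4:ℝ)^i / ε) :=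
          Real.log_le_log (by positivity) h1
      _ = (i:ℝ) * Real.log 4 - Real.log ε := by
          rw [Real.log_div (by positivity) hε.ne', Real.log_pow]
      _ ≤ 2 * (i:ℝ) - Real.log ε := by
          nlinarith [log_four_le_two, Nat.cast_nonneg (α := ℝ) i,
            Real.log_nonneg (by norm_num : (1:ℝ) ≤ 4)]
  have hstep1 : ∑ i ∈ Finset.Icc 1 j,
      Real.log ((1 + (i : ℝ) ^ 2 / ε) ^ ((7 / 6 : ℝ) ^ (j - i + 1)))
      ≤ ∑ i ∈ Finset.Icc 1 j, (7/6:ℝ) ^ (j - i + 1) * (2 * i - Real.log ε) :=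
    Finset.sum_le_sum hlog
  -- rewrite powers
  have hpow : ∀ i ∈ Finset.Icc 1 j,
      (7/6:ℝ) ^ (j - i + 1) * (2 * i - Real.log ε)
        = (7/6:ℝ) ^ (j+1) * (2 * ((i:ℝ) * ((6:ℝ)/7)^i) + (-Real.log ε) * ((6:ℝ)/7)^i) := by
    intro i hi
    have hij : i ≤ j := (Finset.mem_Icc.mp hi).2
    have he : j - i + 1 = (j + 1) - i := by omega
    have hps : (7/6:ℝ) ^ ((j+1) - i) = (7/6:ℝ)^(j+1) / (7/6:ℝ)^i :=
      pow_sub₀ _ (by norm_num) (by omega)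
    have hinv : ((6:ℝ)/7)^i = ((7/6:ℝ)^i)⁻¹ := by
      rw [← inv_pow]; norm_num
    rw [he, hps, hinv]
    field_simp
    ring
  have hstep2 : ∑ i ∈ Finset.Icc 1 j, (7/6:ℝ) ^ (j - i + 1) * (2 * i - Real.log ε)
      ≤ (7/6:ℝ)^(j+1) * (84 + 7 * (-Real.log ε)) := by
    rw [Finset.sum_congr rfl hpow, ← Finset.mul_sum]
    apply mul_le_mul_of_nonneg_left _ (by positivity)
    rw [Finset.sum_add_distrib, ← Finset.mul_sum, ← Finset.mul_sum]
    have h1 := sum_igeo_le j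
    have h2 := sum_geo_le j
    have h2' : (-Real.log ε) * ∑ i ∈ Finset.Icc 1 j, ((6:ℝ)/7)^i ≤ (-Real.log ε) * 7 :=
      mul_le_mul_of_nonneg_left h2 (by linarith)
    nlinarith
  -- divide by p j
  have hplow := p_lower p hp1 hrec j hj
  have hbjpos : (0:ℝ) < (7/6:ℝ)^(j-1) := by positivity
  have hT : (0:ℝ) ≤ (7/6:ℝ)^(j+1) * (84 + 7 * (-Real.log ε)) := by
    apply mul_nonneg (by positivity)
    nlinarith
  have hsum_le : ∑ i ∈ Finset.Icc 1 j,
      Real.log ((1 + (i : ℝ) ^ 2 / ε) ^ ((7 / 6 : ℝ) ^ (j - i + 1)))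
      ≤ (7/6:ℝ)^(j+1) * (84 + 7 * (-Real.log ε)) := le_trans hstep1 hstep2
  have hfinal : 1 / p j * ((7/6:ℝ)^(j+1) * (84 + 7 * (-Real.log ε)))
      ≤ 58 - 5 * Real.log ε := by
    have hdiv : 1 / p j ≤ 1 / (2 * (7/6:ℝ)^(j-1)) :=
      one_div_le_one_div_of_le (by positivity) hplow
    have h1 : 1 / p j * ((7/6:ℝ)^(j+1) * (84 + 7 * (-Real.log ε)))
        ≤ 1 / (2 * (7/6:ℝ)^(j-1)) * ((7/6:ℝ)^(j+1) * (84 + 7 * (-Real.log ε))) :=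
      mul_le_mul_of_nonneg_right hdiv hT
    have hps : (7/6:ℝ)^(j+1) = (7/6:ℝ)^(j-1) * (7/6:ℝ)^2 := by
      rw [← pow_add]
      congr 1
      omega
    have h2 : 1 / (2 * (7/6:ℝ)^(j-1)) * ((7/6:ℝ)^(j+1) * (84 + 7 * (-Real.log ε)))
        = (49/72:ℝ) * (84 + 7 * (-Real.log ε)) := by
      rw [hps]
      field_simp
      ring
    rw [h2] at h1
    nlinarith [hlogε]
  calc 1 / p j * ∑ i ∈ Finset.Icc 1 j,
        Real.log ((1 + (i : ℝ) ^ 2 / ε) ^ ((7 / 6 : ℝ) ^ (j - i + 1)))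
      ≤ 1 / p j * ((7/6:ℝ)^(j+1) * (84 + 7 * (-Real.log ε))) :=
        mul_le_mul_of_nonneg_left hsum_le (one_div_nonneg.mpr hppos.le)
    _ ≤ 58 - 5 * Real.log ε := hfinal
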